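/- Let q ∈ ℂ with q ≠ 0 and q² ≠ 1, set ω = q − q⁻¹, let m ≥ 1, let μ₁, …, μ_m ∈ ℂ be pairwise distinct, and fix 1 ≤ i₀ ≤ m. Let μ′ be the tuple obtained from μ by replacing μ_{i₀} with q² μ_{i₀}, and assume the entries of μ′ are also pairwise distinct. Define t_n(ν) = Σ_{i=1}^{m} (q⁻² ν_i)ⁿ d̃_i(ν). Then for every n ≥ 1: t_n(μ) = t_n(μ′) − ω · n · μ_{i₀}ⁿ + ω² Σ_{s=1}^{n−1} s · μ_{i₀}^s · t_{n−s}(μ). -/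

import Mathlib

open Finset

/- ### Auxiliary lemmas -/

private lemma geomS' (a y : ℂ) : ∀ n : ℕ, 1 ≤ n →
    (y - a) ^ 2 * ∑ s ∈ Icc 1 (n - 1), (s : ℂ) * a ^ s * y ^ (n - s)
      = a * y ^ (n + 1) - (n : ℂ) * a ^ n * y ^ 2 + ((n : ℂ) - 1) * a ^ (n + 1) * y := by
  intro n hn
  induction n, hn using Nat.le_induction with
  | base => simp
  | succ n hn ih =>
    obtain ⟨k, rfl⟩ : ∃ k, n = k + 1 := ⟨n - 1, (Nat.succ_pred_eq_of_pos hn).symm⟩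
    have h1 : k + 1 + 1 - 1 = k + 1 := rfl
    have h2 : k + 1 - 1 = k := rfl
    rw [h1]
    rw [Finset.sum_Icc_succ_top (by omega : 1 ≤ k + 1)]
    have h3 : ∑ s ∈ Icc 1 k, (s : ℂ) * a ^ s * y ^ (k + 1 + 1 - s)
        = y * ∑ s ∈ Icc 1 k, (s : ℂ) * a ^ s * y ^ (k + 1 - s) := by
      rw [Finset.mul_sum]
      refine Finset.sum_congr rfl fun s hs => ?_
      have hs' : s ≤ k := (Finset.mem_Icc.mp hs).2
      rw [show k + 1 + 1 - s = (k + 1 - s) + 1 by omega, pow_succ]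
      ring
    rw [h2] at ih
    rw [h3]
    have hkk : k + 1 + 1 - (k + 1) = 1 := by omega
    rw [hkk]
    push_cast
    push_cast at ih
    linear_combination y * ih

private lemma perterm' (q y u a d d' S Y A N W P R : ℂ) (hq : q ≠ 0) (hya : y - a ≠ 0)
    (hu : q ^ 2 * y = u)
    (hW : W * q ^ 2 = (q ^ 2 - 1) ^ 2)
    (hS : (y - a) ^ 2 * S = a * (Y * y) - N * A * y ^ 2 + (N - 1) * (A * a) * y)
    (hd' : d' * (u - q ^ 2 * a) ^ 2 = d * (u - q ^ 2 * (q ^ 2 * a)) * (u - a))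
    (hP : P * (u - q ^ 2 * a) = d * u)
    (hR : R * (u - q ^ 2 * a) ^ 2 = d * u) :
    Y * d - Y * d' - W * (d * S) = A * (W * (N * P + a * q ^ 2 * R)) := by
  subst hu
  have hB : q ^ 2 * y - q ^ 2 * a ≠ 0 := by
    have h := mul_ne_zero (pow_ne_zero 2 hq) hya
    intro hc; apply h; rw [mul_sub]; exact hc
  have hM : (q ^ 2 * y - q ^ 2 * a) ^ 2 * q ^ 2 ≠ 0 :=
    mul_ne_zero (pow_ne_zero 2 hB) (pow_ne_zero 2 hq)
  apply mul_left_cancel₀ hM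
  linear_combination (-(q ^ 2) * Y) * hd'
    + (-(q ^ 2 * y - q ^ 2 * a) ^ 2 * d * S
        - (q ^ 2 * y - q ^ 2 * a) ^ 2 * A * (N * P + a * q ^ 2 * R)) * hW
    + (-(q ^ 2 - 1) ^ 2 * q ^ 4 * d) * hS
    + (-(q ^ 2 - 1) ^ 2 * A * N * (q ^ 2 * y - q ^ 2 * a)) * hP
    + (-(q ^ 2 - 1) ^ 2 * A * a * q ^ 2) * hR

private lemma perterm0' (q v y a d d' S Y K N : ℂ) (hq : q ≠ 0) (hy : y ≠ 0)
    (hv : q * v = 1) (ha : q ^ 2 * y = a)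
    (hS : (y - a) ^ 2 * S
      = a * (Y * y) - N * (K * Y) * y ^ 2 + (N - 1) * ((K * Y) * a) * y) :
    Y * d - (K * Y) * d' - (q - v) ^ 2 * (d * S)
      = (K * Y) * (d - d' + N * ((q - v) - d * (1 - v ^ 2))) - (q - v) * N * (K * Y) := by
  subst ha
  have hM : y ^ 2 * q ^ 4 ≠ 0 := mul_ne_zero (pow_ne_zero 2 hy) (pow_ne_zero 4 hq)
  apply mul_left_cancel₀ hM
  linear_combination (-(q ^ 2) * d) * hS
    + (y ^ 2 * S * d * q ^ 2 * (2 * q ^ 2 - q * v - 1)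
        - y ^ 2 * d * Y * K * N * q ^ 2 * (1 + q * v)) * hv

open Polynomial in
private lemma deriv_prod_XC' {ι : Type*} [DecidableEq ι] (s : Finset ι) (c : ι → ℂ) :
    derivative (∏ i ∈ s, (X - C (c i))) = ∑ i ∈ s, ∏ j ∈ s.erase i, (X - C (c j)) := by
  induction s using Finset.induction_on with
  | empty => simp
  | insert _ _ ha ih =>
    rename_i a s
    rw [Finset.prod_insert ha, derivative_mul, ih, Finset.sum_insert ha,
      Finset.erase_insert ha]
    have : ∀ i ∈ s, ∏ j ∈ (insert a s).erase i, (X - C (c j))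
        = (X - C (c a)) * ∏ j ∈ s.erase i, (X - C (c j)) := by
      intro i hi
      rw [Finset.erase_insert_of_ne (by rintro rfl; exact ha hi), Finset.prod_insert
        (fun h => ha (Finset.mem_of_mem_erase h))]
    rw [Finset.sum_congr rfl this, Finset.mul_sum]
    simp [add_comm]

open Polynomial in
private lemma keysums' (q : ℂ) (h1q : (1:ℂ) - q ^ 2 ≠ 0) (m : ℕ)
    (μ : Fin m → ℂ) (hμ : Function.Injective μ) (i₀ : Fin m)
    (hb : ∀ j, q ^ 2 * μ i₀ - μ j ≠ 0) (dd : Fin m → ℂ)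
    (hdd : ∀ k, dd k * ∏ j ∈ univ.erase k, (μ k - μ j)
      = q * ∏ j ∈ univ.erase k, (μ k - q ^ 2 * μ j)) :
    (∑ i, dd i * μ i * (μ i - q ^ 2 * μ i₀)⁻¹ = q / (1 - q ^ 2)) ∧
    ((∑ i, dd i * μ i * ((μ i - q ^ 2 * μ i₀) ^ 2)⁻¹)
        * ((1 - q ^ 2) * ((q ^ 2 * μ i₀ - μ i₀) * ∏ j ∈ univ.erase i₀, (q ^ 2 * μ i₀ - μ j)))
      = -(q * ∏ j ∈ univ.erase i₀, (q ^ 2 * μ i₀ - q ^ 2 * μ j))) := by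
  have hq21 : q ^ 2 - (1:ℂ) ≠ 0 := fun h => h1q (by linear_combination -h)
  set QQ : Polynomial ℂ := ∏ j, (X - C (μ j)) with hQQ
  set PP : Polynomial ℂ := ∏ j, (X - C (q ^ 2 * μ j)) with hPP
  set NN : Polynomial ℂ := ∑ i, C (dd i * μ i) * ∏ j ∈ univ.erase i, (X - C (μ j)) with hNN
  have hdist : ∀ i j : Fin m, i ≠ j → μ i - μ j ≠ 0 :=
    fun i j h => sub_ne_zero.mpr (fun e => h (hμ e))
  -- degree facts
  have hQdeg : QQ.degree = (m : ℕ) := by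
    rw [hQQ, degree_prod, Finset.sum_congr rfl fun j _ => degree_X_sub_C (μ j)]
    simp [Finset.card_univ]
  have hPdeg : PP.degree = (m : ℕ) := by
    rw [hPP, degree_prod, Finset.sum_congr rfl fun j _ => degree_X_sub_C (q ^ 2 * μ j)]
    simp [Finset.card_univ]
  have hQmon : QQ.Monic := monic_prod_of_monic _ _ fun j _ => monic_X_sub_C _
  have hPmon : PP.Monic := monic_prod_of_monic _ _ fun j _ => monic_X_sub_C _
  have hCmul : ∀ (c : ℂ) (p : Polynomial ℂ), (C c * p).degree ≤ p.degree := fun c p =>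
    le_trans (degree_mul_le _ _) (by simpa using add_le_add (degree_C_le (a := c)) (le_refl p.degree))
  have hQev : ∀ z, QQ.eval z = ∏ j, (z - μ j) := by
    intro z; rw [hQQ, eval_prod]; simp
  have hPev : ∀ z, PP.eval z = ∏ j, (z - q ^ 2 * μ j) := by
    intro z; rw [hPP, eval_prod]; simp
  have hNev : ∀ z, NN.eval z = ∑ i, dd i * μ i * ∏ j ∈ univ.erase i, (z - μ j) := by
    intro z; rw [hNN, eval_finset_sum]; simp [eval_prod]
  -- the interpolation identity
  have hpoly : C q * QQ - C q * PP = C (q ^ 2 - 1) * NN := by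
    apply Polynomial.eq_of_degrees_lt_of_eval_index_eq (univ : Finset (Fin m)) (v := μ)
      (Function.Injective.injOn hμ)
    · -- degree of LHS
      have h1 : C q * QQ - C q * PP = C q * (QQ - PP) := by ring
      rw [h1]
      calc (C q * (QQ - PP)).degree ≤ (QQ - PP).degree := hCmul _ _
        _ < QQ.degree := degree_sub_lt (hQdeg.trans hPdeg.symm) hQmon.ne_zero
            (by rw [hQmon.leadingCoeff, hPmon.leadingCoeff])
        _ = ((#(univ : Finset (Fin m)) : ℕ) : WithBot ℕ) := by
            rw [hQdeg, Finset.card_univ, Fintype.card_fin]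
    · -- degree of RHS
      calc (C (q ^ 2 - 1) * NN).degree ≤ NN.degree := hCmul _ _
        _ < ((#(univ : Finset (Fin m)) : ℕ) : WithBot ℕ) := by
            rw [hNN]
            apply lt_of_le_of_lt (degree_sum_le _ _)
            rw [Finset.sup_lt_iff (by
              rw [Finset.card_univ, Fintype.card_fin]
              exact_mod_cast WithBot.bot_lt_coe m)]
            intro i _
            calc (C (dd i * μ i) * ∏ j ∈ univ.erase i, (X - C (μ j))).degree
                ≤ (∏ j ∈ univ.erase i, (X - C (μ j))).degree := hCmul _ _
              _ = ((m - 1 : ℕ) : WithBot ℕ) := by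
                  rw [degree_prod, Finset.sum_congr rfl fun j _ => degree_X_sub_C (μ j)]
                  simp [Finset.card_erase_of_mem, Finset.card_univ]
              _ < ((#(univ : Finset (Fin m)) : ℕ) : WithBot ℕ) := by
                  rw [Finset.card_univ, Fintype.card_fin]
                  have hm : 0 < m := i₀.pos
                  exact_mod_cast Nat.sub_lt hm one_pos
    · -- evaluations agree
      intro k _
      have hQk : QQ.eval (μ k) = 0 := by
        rw [hQev]
        exact Finset.prod_eq_zero (Finset.mem_univ k) (sub_self _)
      have hNk : NN.eval (μ k) = dd k * μ k * ∏ j ∈ univ.erase k, (μ k - μ j) := by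
        rw [hNev]
        apply Finset.sum_eq_single k
        · intro i _ hik
          have : μ k - μ k = 0 := sub_self _
          rw [Finset.prod_eq_zero (Finset.mem_erase.mpr ⟨hik.symm, Finset.mem_univ k⟩) this,
            mul_zero]
        · intro h; exact absurd (Finset.mem_univ k) h
      have hPk : PP.eval (μ k) = (μ k - q ^ 2 * μ k) * ∏ j ∈ univ.erase k, (μ k - q ^ 2 * μ j) := by
        rw [hPev, ← Finset.mul_prod_erase _ _ (Finset.mem_univ k)]
      rw [eval_sub, eval_mul, eval_mul, eval_mul, eval_C, eval_C, hQk, hNk, hPk]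
      have := hdd k
      linear_combination (-(q ^ 2 - 1) * μ k) * this
  have hfr : ∀ z : ℂ, (∀ j, μ j ≠ z) →
      ∑ i, dd i * μ i * (μ i - z)⁻¹ = (q - q * (PP.eval z / QQ.eval z)) / (1 - q ^ 2) := by
    intro z hz
    have hQz : QQ.eval z ≠ 0 := by
      rw [hQev]
      exact Finset.prod_ne_zero_iff.mpr fun j _ => sub_ne_zero.mpr fun e => hz j e.symm
    have hper : ∀ i : Fin m, dd i * μ i * (μ i - z)⁻¹ * QQ.eval z
        = -(dd i * μ i * ∏ j ∈ univ.erase i, (z - μ j)) := by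
      intro i
      rw [hQev, ← Finset.mul_prod_erase _ _ (Finset.mem_univ i)]
      have h1 : (μ i - z)⁻¹ * (z - μ i) = -1 := by
        rw [show z - μ i = -(μ i - z) by ring, mul_neg,
          inv_mul_cancel₀ (sub_ne_zero.mpr (hz i))]
      linear_combination (dd i * μ i * ∏ j ∈ univ.erase i, (z - μ j)) * h1
    have hevz := congrArg (eval z) hpoly
    rw [eval_sub, eval_mul, eval_mul, eval_mul, eval_C, eval_C, hNev] at hevz
    have key : (∑ i, dd i * μ i * (μ i - z)⁻¹) * QQ.eval z * (1 - q ^ 2)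
        = q * QQ.eval z - q * PP.eval z := by
      rw [Finset.sum_mul, Finset.sum_mul,
        Finset.sum_congr rfl fun i _ => congrArg (· * (1 - q ^ 2)) (hper i)]
      have h2 : ∑ i, -(dd i * μ i * ∏ j ∈ univ.erase i, (z - μ j)) * (1 - q ^ 2)
          = (∑ i, dd i * μ i * ∏ j ∈ univ.erase i, (z - μ j)) * (-(1 - q ^ 2)) := by
        rw [Finset.sum_mul]
        exact Finset.sum_congr rfl fun i _ => by ring
      rw [h2]
      linear_combination -hevz
    rw [eq_div_iff h1q, show q - q * (PP.eval z / QQ.eval z)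
      = (q * QQ.eval z - q * PP.eval z) / QQ.eval z by field_simp, eq_div_iff hQz]
    linear_combination key
  have hbz : ∀ j, μ j ≠ q ^ 2 * μ i₀ := fun j e => hb j (by rw [e, sub_self])
  have hQb : QQ.eval (q ^ 2 * μ i₀) ≠ 0 := by
    rw [hQev]; exact Finset.prod_ne_zero_iff.mpr fun j _ => hb j
  have hPb : PP.eval (q ^ 2 * μ i₀) = 0 := by
    rw [hPev]; exact Finset.prod_eq_zero (Finset.mem_univ i₀) (sub_self _)
  constructor
  · have h := hfr (q ^ 2 * μ i₀) hbz
    rw [hPb] at h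
    simpa using h
  · -- the derivative identity
    have hU : IsOpen {z : ℂ | ∀ j, μ j ≠ z} := by
      have he : {z : ℂ | ∀ j, μ j ≠ z} = ⋂ j, ({μ j}ᶜ : Set ℂ) := by
        ext z; simp [eq_comm]
      rw [he]
      exact isOpen_iInter_of_finite fun j => isOpen_compl_singleton
    have hbU : (q ^ 2 * μ i₀) ∈ {z : ℂ | ∀ j, μ j ≠ z} := hbz
    have hEq : (fun z => ∑ i, dd i * μ i * (μ i - z)⁻¹)
        =ᶠ[nhds (q ^ 2 * μ i₀)] (fun z => (q - q * (PP.eval z / QQ.eval z)) / (1 - q ^ 2)) :=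
      Filter.eventuallyEq_of_mem (hU.mem_nhds hbU) (fun z hz => hfr z hz)
    have hf' : HasDerivAt (fun z => ∑ i, dd i * μ i * (μ i - z)⁻¹)
        (∑ i, dd i * μ i * (-(-1) / (μ i - q ^ 2 * μ i₀) ^ 2)) (q ^ 2 * μ i₀) := by
      apply HasDerivAt.fun_sum
      intro i _
      have h1 : HasDerivAt (fun z : ℂ => μ i - z) (-1) (q ^ 2 * μ i₀) :=
        (hasDerivAt_id _).const_sub (μ i)
      exact (h1.inv (sub_ne_zero.mpr (hbz i))).const_mul (dd i * μ i)
    have hr' : HasDerivAt (fun z => (q - q * (PP.eval z / QQ.eval z)) / (1 - q ^ 2))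
        (-(q * (((derivative PP).eval (q ^ 2 * μ i₀) * QQ.eval (q ^ 2 * μ i₀)
            - PP.eval (q ^ 2 * μ i₀) * (derivative QQ).eval (q ^ 2 * μ i₀))
          / (QQ.eval (q ^ 2 * μ i₀)) ^ 2)) / (1 - q ^ 2)) (q ^ 2 * μ i₀) := by
      have h2 := ((PP.hasDerivAt (q ^ 2 * μ i₀)).div (QQ.hasDerivAt (q ^ 2 * μ i₀)) hQb)
      exact ((h2.const_mul q).const_sub q).div_const _
    have hdeq := hEq.deriv_eq
    rw [hf'.deriv, hr'.deriv] at hdeq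
    have hder : (derivative PP).eval (q ^ 2 * μ i₀)
        = ∏ j ∈ univ.erase i₀, (q ^ 2 * μ i₀ - q ^ 2 * μ j) := by
      rw [hPP, deriv_prod_XC', eval_finset_sum]
      rw [Finset.sum_eq_single i₀]
      · rw [eval_prod]; simp
      · intro k _ hk
        rw [eval_prod]
        refine Finset.prod_eq_zero (Finset.mem_erase.mpr ⟨hk.symm, Finset.mem_univ i₀⟩) ?_
        simp
      · intro h; exact absurd (Finset.mem_univ i₀) h
    have hQbfac : QQ.eval (q ^ 2 * μ i₀)
        = (q ^ 2 * μ i₀ - μ i₀) * ∏ j ∈ univ.erase i₀, (q ^ 2 * μ i₀ - μ j) := by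
      rw [hQev, ← Finset.mul_prod_erase _ _ (Finset.mem_univ i₀)]
    have hsimp : ∀ i : Fin m, dd i * μ i * (-(-1) / (μ i - q ^ 2 * μ i₀) ^ 2)
        = dd i * μ i * ((μ i - q ^ 2 * μ i₀) ^ 2)⁻¹ := by
      intro i; rw [neg_neg, one_div]
    have hsum0 : (∑ i, dd i * μ i * (-(-1) / (μ i - q ^ 2 * μ i₀) ^ 2))
        = ∑ i, dd i * μ i * ((μ i - q ^ 2 * μ i₀) ^ 2)⁻¹ :=
      Finset.sum_congr rfl fun i _ => hsimp i
    rw [hsum0, hPb, hder] at hdeq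
    rw [hdeq, hQbfac]
    have hba : q ^ 2 * μ i₀ - μ i₀ ≠ 0 := hb i₀
    have hPd : ∏ j ∈ univ.erase i₀, (q ^ 2 * μ i₀ - μ j) ≠ 0 :=
      Finset.prod_ne_zero_iff.mpr fun j _ => hb j
    have hμ0 : μ i₀ ≠ 0 := fun h => hba (by rw [h]; ring)
    field_simp
    ring

set_option maxHeartbeats 3000000
/-- recursion for the second-kind power sums under the shift
`μ_{i₀} ↦ q²μ_{i₀}`:
`tₙ(μ) = tₙ(μ′) − ωnμ_{i₀}ⁿ + ω² Σ_{s=1}^{n−1} s μ_{i₀}^s t_{n−s}(μ)`. -/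
theorem stmt_12 (q : ℂ) (hq : q ≠ 0) (hq2 : q ^ 2 ≠ 1) (ω : ℂ) (hω : ω = q - q⁻¹)
    (m : ℕ) (hm : 1 ≤ m) (μ : Fin m → ℂ) (hμ : Function.Injective μ)
    (i₀ : Fin m) (μ' : Fin m → ℂ)
    (hμ' : μ' = Function.update μ i₀ (q ^ 2 * μ i₀))
    (hμ'inj : Function.Injective μ')
    (t : ℕ → (Fin m → ℂ) → ℂ)
    (ht : ∀ (n : ℕ) (ν : Fin m → ℂ), t n ν = ∑ i, (q⁻¹ ^ 2 * ν i) ^ n *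
      (q * ∏ j ∈ univ.erase i, (ν i - q ^ 2 * ν j) / (ν i - ν j))) :
    ∀ n : ℕ, 1 ≤ n →
      t n μ = t n μ' - ω * (n : ℂ) * μ i₀ ^ n
        + ω ^ 2 * ∑ s ∈ Icc 1 (n - 1), (s : ℂ) * μ i₀ ^ s * t (n - s) μ := by
  subst hω hμ'
  intro n hn
  by_cases ha0 : μ i₀ = 0
  · have hupd : Function.update μ i₀ (q ^ 2 * μ i₀) = μ := by
      rw [ha0, mul_zero, ← ha0, Function.update_eq_self]
    rw [hupd, ha0]
    have hz0 : ∑ s ∈ Icc 1 (n - 1), (s : ℂ) * (0:ℂ) ^ s * t (n - s) μ = 0 :=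
      Finset.sum_eq_zero fun s hs => by
        have hs1 : s ≠ 0 := by have := (Finset.mem_Icc.mp hs).1; omega
        simp [zero_pow hs1]
    rw [hz0, zero_pow (by omega : n ≠ 0)]
    ring
  -- main case
  have h1q : (1:ℂ) - q ^ 2 ≠ 0 := sub_ne_zero.mpr fun h => hq2 h.symm
  have hq21 : q ^ 2 - (1:ℂ) ≠ 0 := sub_ne_zero.mpr hq2
  have hdist : ∀ i j : Fin m, i ≠ j → μ i - μ j ≠ 0 :=
    fun i j h => sub_ne_zero.mpr fun e => h (hμ e)
  have hb : ∀ j, q ^ 2 * μ i₀ - μ j ≠ 0 := by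
    intro j
    by_cases hj : j = i₀
    · subst hj
      intro h
      have h2 : μ j * (q ^ 2 - 1) = 0 := by linear_combination h
      rcases mul_eq_zero.mp h2 with h' | h'
      · exact ha0 h'
      · exact hq21 h'
    · intro h
      have e1 : Function.update μ i₀ (q ^ 2 * μ i₀) j = Function.update μ i₀ (q ^ 2 * μ i₀) i₀ := by
        rw [Function.update_of_ne hj, Function.update_self]
        linear_combination -h
      exact hj (hμ'inj e1)
  set dd : (Fin m → ℂ) → Fin m → ℂ :=
    fun ν i => q * ∏ j ∈ univ.erase i, (ν i - q ^ 2 * ν j) / (ν i - ν j) with hdd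
  have hfold : ∀ (ν : Fin m → ℂ) (k : ℕ),
      (∑ i, (q⁻¹ ^ 2 * ν i) ^ k *
        (q * ∏ j ∈ univ.erase i, (ν i - q ^ 2 * ν j) / (ν i - ν j)))
      = ∑ i, (q⁻¹ ^ 2 * ν i) ^ k * dd ν i := fun ν k => rfl
  simp only [ht]
  rw [hfold μ n, hfold (Function.update μ i₀ (q ^ 2 * μ i₀)) n]
  have hcor : ∑ s ∈ Icc 1 (n - 1), (s : ℂ) * μ i₀ ^ s *
        (∑ i, (q⁻¹ ^ 2 * μ i) ^ (n - s) *
          (q * ∏ j ∈ univ.erase i, (μ i - q ^ 2 * μ j) / (μ i - μ j)))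
      = ∑ i, dd μ i *
          (∑ s ∈ Icc 1 (n - 1), (s : ℂ) * μ i₀ ^ s * (q⁻¹ ^ 2 * μ i) ^ (n - s)) := by
    calc ∑ s ∈ Icc 1 (n - 1), (s : ℂ) * μ i₀ ^ s *
          (∑ i, (q⁻¹ ^ 2 * μ i) ^ (n - s) * dd μ i)
        = ∑ s ∈ Icc 1 (n - 1), ∑ i, (s : ℂ) * μ i₀ ^ s * ((q⁻¹ ^ 2 * μ i) ^ (n - s) * dd μ i) :=
          Finset.sum_congr rfl fun s _ => Finset.mul_sum _ _ _
      _ = ∑ i, ∑ s ∈ Icc 1 (n - 1), (s : ℂ) * μ i₀ ^ s * ((q⁻¹ ^ 2 * μ i) ^ (n - s) * dd μ i) :=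
          Finset.sum_comm
      _ = ∑ i, dd μ i * (∑ s ∈ Icc 1 (n - 1), (s : ℂ) * μ i₀ ^ s * (q⁻¹ ^ 2 * μ i) ^ (n - s)) := by
          refine Finset.sum_congr rfl fun i _ => ?_
          rw [Finset.mul_sum]
          exact Finset.sum_congr rfl fun s _ => by ring
  rw [hcor]
  suffices key : ∑ i, ((q⁻¹ ^ 2 * μ i) ^ n * dd μ i
      - (q⁻¹ ^ 2 * Function.update μ i₀ (q ^ 2 * μ i₀) i) ^ n
          * dd (Function.update μ i₀ (q ^ 2 * μ i₀)) i
      - (q - q⁻¹) ^ 2 * (dd μ i *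
          (∑ s ∈ Icc 1 (n - 1), (s : ℂ) * μ i₀ ^ s * (q⁻¹ ^ 2 * μ i) ^ (n - s))))
      = -((q - q⁻¹) * (n : ℂ) * μ i₀ ^ n) by
    have split : ∑ i, ((q⁻¹ ^ 2 * μ i) ^ n * dd μ i
        - (q⁻¹ ^ 2 * Function.update μ i₀ (q ^ 2 * μ i₀) i) ^ n
            * dd (Function.update μ i₀ (q ^ 2 * μ i₀)) i
        - (q - q⁻¹) ^ 2 * (dd μ i *
            (∑ s ∈ Icc 1 (n - 1), (s : ℂ) * μ i₀ ^ s * (q⁻¹ ^ 2 * μ i) ^ (n - s))))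
        = (∑ i, (q⁻¹ ^ 2 * μ i) ^ n * dd μ i)
          - (∑ i, (q⁻¹ ^ 2 * Function.update μ i₀ (q ^ 2 * μ i₀) i) ^ n
              * dd (Function.update μ i₀ (q ^ 2 * μ i₀)) i)
          - (q - q⁻¹) ^ 2 * (∑ i, dd μ i *
              (∑ s ∈ Icc 1 (n - 1), (s : ℂ) * μ i₀ ^ s * (q⁻¹ ^ 2 * μ i) ^ (n - s))) := by
      rw [Finset.sum_sub_distrib, Finset.sum_sub_distrib, ← Finset.mul_sum]
    linear_combination key - split
  rw [← Finset.sum_erase_add _ _ (Finset.mem_univ i₀)]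
  have hW : (q - q⁻¹) ^ 2 * q ^ 2 = (q ^ 2 - 1) ^ 2 := by
    field_simp
  -- per-term identity away from i₀
  have hterm : ∀ i ∈ univ.erase i₀, ((q⁻¹ ^ 2 * μ i) ^ n * dd μ i
      - (q⁻¹ ^ 2 * Function.update μ i₀ (q ^ 2 * μ i₀) i) ^ n
          * dd (Function.update μ i₀ (q ^ 2 * μ i₀)) i
      - (q - q⁻¹) ^ 2 * (dd μ i *
          (∑ s ∈ Icc 1 (n - 1), (s : ℂ) * μ i₀ ^ s * (q⁻¹ ^ 2 * μ i) ^ (n - s))))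
      = μ i₀ ^ n * ((q - q⁻¹) ^ 2 * ((n : ℂ) * (dd μ i * μ i * (μ i - q ^ 2 * μ i₀)⁻¹)
          + μ i₀ * q ^ 2 * (dd μ i * μ i * ((μ i - q ^ 2 * μ i₀) ^ 2)⁻¹))) := by
    intro i hi
    have hii₀ : i ≠ i₀ := (Finset.mem_erase.mp hi).1
    rw [Function.update_of_ne hii₀]
    have hμib : μ i - q ^ 2 * μ i₀ ≠ 0 := fun h => hb i (by linear_combination -h)
    have hu : q ^ 2 * (q⁻¹ ^ 2 * μ i) = μ i := by
      field_simp
    have hya : q⁻¹ ^ 2 * μ i - μ i₀ ≠ 0 := by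
      intro h
      apply hμib
      rw [sub_eq_zero] at h
      have h2 : q ^ 2 * (q⁻¹ ^ 2 * μ i) = q ^ 2 * μ i₀ := by rw [h]
      rw [hu] at h2
      rw [h2, sub_self]
    have hS := geomS' (μ i₀) (q⁻¹ ^ 2 * μ i) n hn
    rw [show (q⁻¹ ^ 2 * μ i) ^ (n + 1) = (q⁻¹ ^ 2 * μ i) ^ n * (q⁻¹ ^ 2 * μ i) from
      pow_succ _ n, show μ i₀ ^ (n + 1) = μ i₀ ^ n * μ i₀ from pow_succ _ n] at hS
    have hP : (dd μ i * μ i * (μ i - q ^ 2 * μ i₀)⁻¹) * (μ i - q ^ 2 * μ i₀)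
        = dd μ i * μ i := by
      rw [mul_assoc, inv_mul_cancel₀ hμib, mul_one]
    have hR : (dd μ i * μ i * ((μ i - q ^ 2 * μ i₀) ^ 2)⁻¹) * (μ i - q ^ 2 * μ i₀) ^ 2
        = dd μ i * μ i := by
      rw [mul_assoc, inv_mul_cancel₀ (pow_ne_zero 2 hμib), mul_one]
    have hi₀e : i₀ ∈ univ.erase i := Finset.mem_erase.mpr ⟨hii₀.symm, Finset.mem_univ i₀⟩
    have hsp1 : dd μ i = q * ((μ i - q ^ 2 * μ i₀) / (μ i - μ i₀)
        * ∏ j ∈ (univ.erase i).erase i₀, (μ i - q ^ 2 * μ j) / (μ i - μ j)) := by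
      have h0 : dd μ i = q * ∏ j ∈ univ.erase i, (μ i - q ^ 2 * μ j) / (μ i - μ j) := rfl
      rw [h0, ← Finset.mul_prod_erase _ _ hi₀e]
    have hsp2 : dd (Function.update μ i₀ (q ^ 2 * μ i₀)) i
        = q * ((μ i - q ^ 2 * (q ^ 2 * μ i₀)) / (μ i - q ^ 2 * μ i₀)
            * ∏ j ∈ (univ.erase i).erase i₀, (μ i - q ^ 2 * μ j) / (μ i - μ j)) := by
      have h0 : dd (Function.update μ i₀ (q ^ 2 * μ i₀)) i
          = q * ∏ j ∈ univ.erase i,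
              (Function.update μ i₀ (q ^ 2 * μ i₀) i
                  - q ^ 2 * Function.update μ i₀ (q ^ 2 * μ i₀) j)
                / (Function.update μ i₀ (q ^ 2 * μ i₀) i
                  - Function.update μ i₀ (q ^ 2 * μ i₀) j) := rfl
      rw [h0, ← Finset.mul_prod_erase _ _ hi₀e, Function.update_self,
        Function.update_of_ne hii₀]
      have hpr : ∏ j ∈ (univ.erase i).erase i₀,
            (μ i - q ^ 2 * Function.update μ i₀ (q ^ 2 * μ i₀) j)
              / (μ i - Function.update μ i₀ (q ^ 2 * μ i₀) j)
          = ∏ j ∈ (univ.erase i).erase i₀, (μ i - q ^ 2 * μ j) / (μ i - μ j) :=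
        Finset.prod_congr rfl fun j hj => by
          rw [Function.update_of_ne (Finset.mem_erase.mp hj).1]
      rw [hpr]
    have hd' : dd (Function.update μ i₀ (q ^ 2 * μ i₀)) i * (μ i - q ^ 2 * μ i₀) ^ 2
        = dd μ i * (μ i - q ^ 2 * (q ^ 2 * μ i₀)) * (μ i - μ i₀) := by
      have hde : μ i - μ i₀ ≠ 0 := hdist i i₀ hii₀
      rw [hsp1, hsp2, div_eq_mul_inv, div_eq_mul_inv]
      have h1 : (μ i - q ^ 2 * μ i₀)⁻¹ * (μ i - q ^ 2 * μ i₀) = 1 := inv_mul_cancel₀ hμib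
      have h2 : (μ i - μ i₀)⁻¹ * (μ i - μ i₀) = 1 := inv_mul_cancel₀ hde
      linear_combination (q * (μ i - q ^ 2 * (q ^ 2 * μ i₀))
          * (∏ j ∈ (univ.erase i).erase i₀, (μ i - q ^ 2 * μ j) / (μ i - μ j))
          * (μ i - q ^ 2 * μ i₀)) * h1
        - (q * (μ i - q ^ 2 * (q ^ 2 * μ i₀))
          * (∏ j ∈ (univ.erase i).erase i₀, (μ i - q ^ 2 * μ j) / (μ i - μ j))
          * (μ i - q ^ 2 * μ i₀)) * h2
    exact perterm' q (q⁻¹ ^ 2 * μ i) (μ i) (μ i₀) (dd μ i)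
      (dd (Function.update μ i₀ (q ^ 2 * μ i₀)) i)
      (∑ s ∈ Icc 1 (n - 1), (s : ℂ) * μ i₀ ^ s * (q⁻¹ ^ 2 * μ i) ^ (n - s))
      ((q⁻¹ ^ 2 * μ i) ^ n) (μ i₀ ^ n) (n : ℂ) ((q - q⁻¹) ^ 2)
      (dd μ i * μ i * (μ i - q ^ 2 * μ i₀)⁻¹)
      (dd μ i * μ i * ((μ i - q ^ 2 * μ i₀) ^ 2)⁻¹)
      hq hya hu hW hS hd' hP hR
  rw [Finset.sum_congr rfl hterm]
  -- the i₀ term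
  obtain ⟨y₀, hy₀⟩ : ∃ y₀, q⁻¹ ^ 2 * μ i₀ = y₀ := ⟨_, rfl⟩
  have he : q ^ 2 * y₀ = μ i₀ := by
    rw [← hy₀]
    field_simp
  have hy₀0 : y₀ ≠ 0 := by
    rw [← hy₀]
    exact mul_ne_zero (pow_ne_zero _ (inv_ne_zero hq)) ha0
  have hvq : q * q⁻¹ = 1 := mul_inv_cancel₀ hq
  have hAn : μ i₀ ^ n = (q ^ 2) ^ n * y₀ ^ n := by rw [← he, mul_pow]
  have hS0 := geomS' (μ i₀) y₀ n hn
  rw [show y₀ ^ (n + 1) = y₀ ^ n * y₀ from pow_succ _ n,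
    show μ i₀ ^ (n + 1) = μ i₀ ^ n * μ i₀ from pow_succ _ n, hAn] at hS0
  rw [Function.update_self, hy₀,
    show q⁻¹ ^ 2 * (q ^ 2 * μ i₀) = q ^ 2 * y₀ by rw [← hy₀]; ring, mul_pow]
  have hpt0 := perterm0' q q⁻¹ y₀ (μ i₀) (dd μ i₀)
    (dd (Function.update μ i₀ (q ^ 2 * μ i₀)) i₀)
    (∑ s ∈ Icc 1 (n - 1), (s : ℂ) * μ i₀ ^ s * y₀ ^ (n - s))
    (y₀ ^ n) ((q ^ 2) ^ n) (n : ℂ) hq hy₀0 hvq he hS0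
  rw [hpt0]
  -- cross-multiplied form of dd μ
  have hdd_cross : ∀ k, dd μ k * ∏ j ∈ univ.erase k, (μ k - μ j)
      = q * ∏ j ∈ univ.erase k, (μ k - q ^ 2 * μ j) := by
    intro k
    have h0 : dd μ k = q * ∏ j ∈ univ.erase k, (μ k - q ^ 2 * μ j) / (μ k - μ j) := rfl
    have hden : ∏ j ∈ univ.erase k, (μ k - μ j) ≠ 0 :=
      Finset.prod_ne_zero_iff.mpr fun j hj =>
        hdist k j (Ne.symm (Finset.mem_erase.mp hj).1)
    rw [h0, Finset.prod_div_distrib, mul_assoc, div_mul_cancel₀ _ hden]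
  obtain ⟨hA1, hA2⟩ := keysums' q h1q m μ hμ i₀ hb (dd μ) hdd_cross
  -- value of dd μ' at i₀
  have hden2 : ∏ j ∈ univ.erase i₀, (q ^ 2 * μ i₀ - μ j) ≠ 0 :=
    Finset.prod_ne_zero_iff.mpr fun j _ => hb j
  have hd'i₀ : dd (Function.update μ i₀ (q ^ 2 * μ i₀)) i₀
        * ∏ j ∈ univ.erase i₀, (q ^ 2 * μ i₀ - μ j)
      = q * ∏ j ∈ univ.erase i₀, (q ^ 2 * μ i₀ - q ^ 2 * μ j) := by
    have h0 : dd (Function.update μ i₀ (q ^ 2 * μ i₀)) i₀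
        = q * ∏ j ∈ univ.erase i₀,
            (Function.update μ i₀ (q ^ 2 * μ i₀) i₀
                - q ^ 2 * Function.update μ i₀ (q ^ 2 * μ i₀) j)
              / (Function.update μ i₀ (q ^ 2 * μ i₀) i₀
                - Function.update μ i₀ (q ^ 2 * μ i₀) j) := rfl
    have hpr : ∏ j ∈ univ.erase i₀,
          (Function.update μ i₀ (q ^ 2 * μ i₀) i₀
              - q ^ 2 * Function.update μ i₀ (q ^ 2 * μ i₀) j)
            / (Function.update μ i₀ (q ^ 2 * μ i₀) i₀
              - Function.update μ i₀ (q ^ 2 * μ i₀) j)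
        = ∏ j ∈ univ.erase i₀, (q ^ 2 * μ i₀ - q ^ 2 * μ j) / (q ^ 2 * μ i₀ - μ j) :=
      Finset.prod_congr rfl fun j hj => by
        rw [Function.update_self, Function.update_of_ne (Finset.mem_erase.mp hj).1]
    rw [h0, hpr, Finset.prod_div_distrib, mul_assoc, div_mul_cancel₀ _ hden2]
  -- solve for the second sum
  have hba : q ^ 2 * μ i₀ - μ i₀ ≠ 0 := hb i₀
  have hSR : (∑ i, dd μ i * μ i * ((μ i - q ^ 2 * μ i₀) ^ 2)⁻¹)
      * ((1 - q ^ 2) * (q ^ 2 * μ i₀ - μ i₀))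
      = -(dd (Function.update μ i₀ (q ^ 2 * μ i₀)) i₀) := by
    apply mul_right_cancel₀ hden2
    linear_combination hA2 + hd'i₀
  -- split the two erase-sums
  have hsum2 : ∑ i ∈ univ.erase i₀, μ i₀ ^ n * ((q - q⁻¹) ^ 2
        * ((n : ℂ) * (dd μ i * μ i * (μ i - q ^ 2 * μ i₀)⁻¹)
          + μ i₀ * q ^ 2 * (dd μ i * μ i * ((μ i - q ^ 2 * μ i₀) ^ 2)⁻¹)))
      = μ i₀ ^ n * (q - q⁻¹) ^ 2 * ((n : ℂ)
          * (∑ i ∈ univ.erase i₀, dd μ i * μ i * (μ i - q ^ 2 * μ i₀)⁻¹)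
        + μ i₀ * q ^ 2
          * (∑ i ∈ univ.erase i₀, dd μ i * μ i * ((μ i - q ^ 2 * μ i₀) ^ 2)⁻¹)) := by
    rw [Finset.mul_sum, Finset.mul_sum, ← Finset.sum_add_distrib, Finset.mul_sum]
    exact Finset.sum_congr rfl fun i _ => by ring
  rw [hsum2, Finset.sum_erase_eq_sub (Finset.mem_univ i₀),
    Finset.sum_erase_eq_sub (Finset.mem_univ i₀), hA1]
  -- final scalar computation
  have hia : μ i₀ - q ^ 2 * μ i₀ ≠ 0 := fun h => hba (by linear_combination -h)
  rw [hAn]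
  have hM : ((1 - q ^ 2) * (μ i₀ - q ^ 2 * μ i₀) ^ 2) * q ^ 2 ≠ 0 :=
    mul_ne_zero (mul_ne_zero h1q (pow_ne_zero 2 hia)) (pow_ne_zero 2 hq)
  apply mul_left_cancel₀ hM
  have e1 : (μ i₀ - q ^ 2 * μ i₀) * (μ i₀ - q ^ 2 * μ i₀)⁻¹ = 1 := mul_inv_cancel₀ hia
  have e2 : (μ i₀ - q ^ 2 * μ i₀) ^ 2 * ((μ i₀ - q ^ 2 * μ i₀) ^ 2)⁻¹ = 1 :=
    mul_inv_cancel₀ (pow_ne_zero 2 hia)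
  have e3 : (1 - q ^ 2) * (1 - q ^ 2)⁻¹ = 1 := mul_inv_cancel₀ h1q
  linear_combination
    ((μ i₀ - q ^ 2 * μ i₀) ^ 2 * q ^ 3 * ((q ^ 2) ^ n * y₀ ^ n) * (q - q⁻¹) ^ 2 * (n : ℂ)) * e3
    + (-((1 - q ^ 2) * (μ i₀ - q ^ 2 * μ i₀) * q ^ 2 * ((q ^ 2) ^ n * y₀ ^ n)
        * (q - q⁻¹) ^ 2 * (n : ℂ) * dd μ i₀ * μ i₀)) * e1
    + (-((1 - q ^ 2) * ((q ^ 2) ^ n * y₀ ^ n) * μ i₀ ^ 2 * dd μ i₀ * q ^ 4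
        * (q - q⁻¹) ^ 2)) * e2
    + (-((μ i₀ - q ^ 2 * μ i₀) * q ^ 2 * ((q ^ 2) ^ n * y₀ ^ n) * μ i₀
        * (q ^ 2 - 1) ^ 2)) * hSR
    + (-((μ i₀ - q ^ 2 * μ i₀) ^ 2 * q * ((q ^ 2) ^ n * y₀ ^ n) * (n : ℂ)
          * (2 * q ^ 2 - q * q⁻¹ - 1))
        + (1 - q ^ 2) * (μ i₀ - q ^ 2 * μ i₀) * ((q ^ 2) ^ n * y₀ ^ n) * (n : ℂ)
          * dd μ i₀ * μ i₀ * (2 * q ^ 2 - q * q⁻¹ - 1)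
        - (1 - q ^ 2) * (μ i₀ - q ^ 2 * μ i₀) ^ 2 * ((q ^ 2) ^ n * y₀ ^ n) * μ i₀ * q ^ 2
          * (∑ i, dd μ i * μ i * ((μ i - q ^ 2 * μ i₀) ^ 2)⁻¹) * (2 * q ^ 2 - q * q⁻¹ - 1)
        + (1 - q ^ 2) * ((q ^ 2) ^ n * y₀ ^ n) * μ i₀ ^ 2 * dd μ i₀ * q ^ 2
          * (2 * q ^ 2 - q * q⁻¹ - 1)
        + (1 - q ^ 2) * (μ i₀ - q ^ 2 * μ i₀) ^ 2 * ((q ^ 2) ^ n * y₀ ^ n) * (n : ℂ)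
          * dd μ i₀ * (q * q⁻¹ + 1)
        - (1 - q ^ 2) * (μ i₀ - q ^ 2 * μ i₀) ^ 2 * q * ((q ^ 2) ^ n * y₀ ^ n) * (n : ℂ)) * hvq
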